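/- Let n be an integer with n = 4 or n ≥ 7. Set P = 2n² − 5n + 5, let F be the nonnegative square root of [ (3n²−12n+16)/4 − n²P/(4(2n²+P)) ] / (n−1)², and set E = 2F − 1. Then [ (n²−10n+16)/4 + n(n+2)(n−2)(n−4)/(8(n²−2n+4)) − (3/8)n(n−2) + (n+2)( (2n²−3n+4)/(3n²−2n+4) + (−6n²+24n−P)/(16n(n+1)) ) ] / (n−1)² ≥ (E² − 1)/4. -/

import Mathlib

/-- The polynomial `P(n) = 2n² - 5n + 5`. -/
noncomputable def Pn (n : ℕ) : ℝ := 2*(n:ℝ)^2 - 5*(n:ℝ) + 5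

/-- `F_n`: the nonnegative square root of
`[(3n²-12n+16)/4 - n²P(n)/(4(2n²+P(n)))]/(n-1)²`. -/
noncomputable def Fn (n : ℕ) : ℝ :=
  Real.sqrt (((3*(n:ℝ)^2 - 12*(n:ℝ) + 16)/4
    - (n:ℝ)^2*Pn n/(4*(2*(n:ℝ)^2 + Pn n))) / ((n:ℝ)-1)^2)

/-- `E_n = 2F_n - 1`. -/
noncomputable def En (n : ℕ) : ℝ := 2*Fn n - 1

lemma sqrt_ge_of_sq_le (c A : ℝ) (hc : 0 ≤ c) (h1 : c^2 ≤ A) : c ≤ Real.sqrt A :=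
  (Real.sqrt_sq hc).symm.trans_le (Real.sqrt_le_sqrt h1)

set_option maxHeartbeats 1600000 in
/-- **Arithmetic verification of T-energy positivity for `n = 4` or `n ≥ 7`.**
With `P = 2n² - 5n + 5`, `F` the nonnegative square root of
`[(3n²-12n+16)/4 - n²P/(4(2n²+P))]/(n-1)²` and `E = 2F - 1`, one has
`[(n²-10n+16)/4 + n(n+2)(n-2)(n-4)/(8(n²-2n+4)) - (3/8)n(n-2)
  + (n+2)((2n²-3n+4)/(3n²-2n+4) + (-6n²+24n-P)/(16n(n+1)))]/(n-1)² ≥ (E²-1)/4`. -/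
theorem zerilli_arithmetic_inequality_high_dim
    (n : ℕ) (hn : n = 4 ∨ 7 ≤ n) :
    (((n:ℝ)^2 - 10*(n:ℝ) + 16)/4
      + (n:ℝ)*((n:ℝ)+2)*((n:ℝ)-2)*((n:ℝ)-4)/(8*((n:ℝ)^2 - 2*(n:ℝ) + 4))
      - (3/8)*(n:ℝ)*((n:ℝ)-2)
      + ((n:ℝ)+2)*((2*(n:ℝ)^2 - 3*(n:ℝ) + 4)/(3*(n:ℝ)^2 - 2*(n:ℝ) + 4)
          + (-6*(n:ℝ)^2 + 24*(n:ℝ) - Pn n)/(16*(n:ℝ)*((n:ℝ)+1))))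
      / ((n:ℝ)-1)^2
    ≥ (En n^2 - 1)/4 := by
  rw [ge_iff_le]
  have hx4 : (4:ℝ) ≤ (n:ℝ) := by
    rcases hn with h | h
    · subst h; norm_num
    · have : (7:ℝ) ≤ (n:ℝ) := by exact_mod_cast h
      linarith
  have hQ : (0:ℝ) < 4*(n:ℝ)^2 - 5*(n:ℝ) + 5 := by nlinarith
  have hx1 : (0:ℝ) < ((n:ℝ)-1)^2 := by nlinarith
  have hA : 0 ≤ ((3*(n:ℝ)^2 - 12*(n:ℝ) + 16)/4
      - (n:ℝ)^2*Pn n/(4*(2*(n:ℝ)^2 + Pn n))) / ((n:ℝ)-1)^2 := by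
    simp only [Pn]
    apply div_nonneg _ (le_of_lt hx1)
    rw [sub_nonneg, div_le_div_iff₀ (by nlinarith) (by norm_num)]
    have hy4 : (0:ℝ) ≤ (n:ℝ) - 4 := by linarith
    nlinarith [pow_nonneg hy4 2, pow_nonneg hy4 3, pow_nonneg hy4 4]
  have hF2 := Real.sq_sqrt hA
  have hE : (En n^2 - 1)/4 = ((3*(n:ℝ)^2 - 12*(n:ℝ) + 16)/4
      - (n:ℝ)^2*Pn n/(4*(2*(n:ℝ)^2 + Pn n))) / ((n:ℝ)-1)^2 - Fn n := by
    simp only [En, Fn]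
    linear_combination hF2
  rw [hE]
  have key : ∀ c : ℝ, 0 ≤ c →
      c^2 ≤ ((3*(n:ℝ)^2 - 12*(n:ℝ) + 16)/4
        - (n:ℝ)^2*Pn n/(4*(2*(n:ℝ)^2 + Pn n))) / ((n:ℝ)-1)^2 →
      ((3*(n:ℝ)^2 - 12*(n:ℝ) + 16)/4
        - (n:ℝ)^2*Pn n/(4*(2*(n:ℝ)^2 + Pn n))) / ((n:ℝ)-1)^2
        - (((n:ℝ)^2 - 10*(n:ℝ) + 16)/4
          + (n:ℝ)*((n:ℝ)+2)*((n:ℝ)-2)*((n:ℝ)-4)/(8*((n:ℝ)^2 - 2*(n:ℝ) + 4))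
          - (3/8)*(n:ℝ)*((n:ℝ)-2)
          + ((n:ℝ)+2)*((2*(n:ℝ)^2 - 3*(n:ℝ) + 4)/(3*(n:ℝ)^2 - 2*(n:ℝ) + 4)
              + (-6*(n:ℝ)^2 + 24*(n:ℝ) - Pn n)/(16*(n:ℝ)*((n:ℝ)+1))))
          / ((n:ℝ)-1)^2 ≤ c →
      ((3*(n:ℝ)^2 - 12*(n:ℝ) + 16)/4
        - (n:ℝ)^2*Pn n/(4*(2*(n:ℝ)^2 + Pn n))) / ((n:ℝ)-1)^2 - Fn n
      ≤ (((n:ℝ)^2 - 10*(n:ℝ) + 16)/4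
        + (n:ℝ)*((n:ℝ)+2)*((n:ℝ)-2)*((n:ℝ)-4)/(8*((n:ℝ)^2 - 2*(n:ℝ) + 4))
        - (3/8)*(n:ℝ)*((n:ℝ)-2)
        + ((n:ℝ)+2)*((2*(n:ℝ)^2 - 3*(n:ℝ) + 4)/(3*(n:ℝ)^2 - 2*(n:ℝ) + 4)
            + (-6*(n:ℝ)^2 + 24*(n:ℝ) - Pn n)/(16*(n:ℝ)*((n:ℝ)+1))))
        / ((n:ℝ)-1)^2 := by
    intro c hc h1 h2
    have h3 : c ≤ Fn n := by
      simp only [Fn]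
      exact sqrt_ge_of_sq_le c _ hc h1
    linarith
  rcases hn with h | h
  · -- n = 4
    subst h
    apply key (53/100) (by norm_num)
    · norm_num [Pn]
    · norm_num [Pn]
  · rcases lt_or_ge ((n:ℝ)) 10 with h10 | h10
    · -- n = 7, 8 or 9
      have h7 : 7 ≤ n := h
      have hn10 : n < 10 := by exact_mod_cast h10
      interval_cases n
      · apply key (635/1000) (by norm_num)
        · norm_num [Pn]
        · norm_num [Pn]
      · apply key (65/100) (by norm_num)
        · norm_num [Pn]
        · norm_num [Pn]
      · apply key (65/100) (by norm_num)
        · norm_num [Pn]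
        · norm_num [Pn]
    · -- n ≥ 10
      have hy : (0:ℝ) ≤ (n:ℝ) - 10 := by linarith
      have hxpos : (0:ℝ) < (n:ℝ) := by linarith
      have hne0 : ((n:ℝ)-1) ≠ 0 := by nlinarith
      have hneQ : (2*(n:ℝ)^2 + (2*(n:ℝ)^2 - 5*(n:ℝ) + 5)) ≠ 0 := by nlinarith
      have hd1 : (0:ℝ) < (n:ℝ)^2 - 2*(n:ℝ) + 4 := by nlinarith
      have hd2 : (0:ℝ) < 3*(n:ℝ)^2 - 2*(n:ℝ) + 4 := by nlinarith
      have hne1 : ((n:ℝ)^2 - 2*(n:ℝ) + 4) ≠ 0 := ne_of_gt hd1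
      have hne2 : (3*(n:ℝ)^2 - 2*(n:ℝ) + 4) ≠ 0 := ne_of_gt hd2
      have hne3 : (n:ℝ) ≠ 0 := ne_of_gt hxpos
      have hne4 : ((n:ℝ)+1) ≠ 0 := by nlinarith
      have hArw : ((3*(n:ℝ)^2 - 12*(n:ℝ) + 16)/4
          - (n:ℝ)^2*Pn n/(4*(2*(n:ℝ)^2 + Pn n))) / ((n:ℝ)-1)^2
          = (10*(n:ℝ)^4 - 58*(n:ℝ)^3 + 134*(n:ℝ)^2 - 140*(n:ℝ) + 80)
            / ((4*(2*(n:ℝ)^2 + (2*(n:ℝ)^2 - 5*(n:ℝ) + 5))) * ((n:ℝ)-1)^2) := by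
        simp only [Pn]
        generalize hD : (2*(n:ℝ)^2 + (2*(n:ℝ)^2 - 5*(n:ℝ) + 5)) = D at hneQ ⊢
        field_simp
        subst hD
        ring
      have hLrw : (((n:ℝ)^2 - 10*(n:ℝ) + 16)/4
          + (n:ℝ)*((n:ℝ)+2)*((n:ℝ)-2)*((n:ℝ)-4)/(8*((n:ℝ)^2 - 2*(n:ℝ) + 4))
          - (3/8)*(n:ℝ)*((n:ℝ)-2)
          + ((n:ℝ)+2)*((2*(n:ℝ)^2 - 3*(n:ℝ) + 4)/(3*(n:ℝ)^2 - 2*(n:ℝ) + 4)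
              + (-6*(n:ℝ)^2 + 24*(n:ℝ) - Pn n)/(16*(n:ℝ)*((n:ℝ)+1))))
          / ((n:ℝ)-1)^2
          = (-704*(n:ℝ)^7 + 2936*(n:ℝ)^6 - 5384*(n:ℝ)^5 + 7152*(n:ℝ)^4
              + 7456*(n:ℝ)^3 - 8256*(n:ℝ)^2 + 20352*(n:ℝ) - 1280)
            / (((n:ℝ)-1)^2 * (8*((n:ℝ)^2 - 2*(n:ℝ) + 4)
                * ((3*(n:ℝ)^2 - 2*(n:ℝ) + 4) * (16*(n:ℝ)*((n:ℝ)+1))))) := by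
        simp only [Pn]
        generalize hD1 : ((n:ℝ)^2 - 2*(n:ℝ) + 4) = D1 at hne1 ⊢
        generalize hD2 : (3*(n:ℝ)^2 - 2*(n:ℝ) + 4) = D2 at hne2 ⊢
        field_simp
        subst hD1 hD2
        ring
      have hD1pos : (0:ℝ) < (4*(2*(n:ℝ)^2 + (2*(n:ℝ)^2 - 5*(n:ℝ) + 5))) * ((n:ℝ)-1)^2 := by
        apply mul_pos (by nlinarith) hx1
      have hD2pos : (0:ℝ) < ((n:ℝ)-1)^2 * (8*((n:ℝ)^2 - 2*(n:ℝ) + 4)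
          * ((3*(n:ℝ)^2 - 2*(n:ℝ) + 4) * (16*(n:ℝ)*((n:ℝ)+1)))) := by
        apply mul_pos hx1
        apply mul_pos (by nlinarith)
        apply mul_pos hd2 (by nlinarith)
      apply key (16/25) (by norm_num)
      · rw [hArw, le_div_iff₀ hD1pos]
        nlinarith [pow_nonneg hy 2, pow_nonneg hy 3, pow_nonneg hy 4]
      · rw [hArw, hLrw, div_sub_div _ _ (ne_of_gt hD1pos) (ne_of_gt hD2pos),
          div_le_iff₀ (mul_pos hD1pos hD2pos)]
        nlinarith [sq_nonneg ((n:ℝ)-1),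
          mul_nonneg (sq_nonneg ((n:ℝ)-1)) (pow_nonneg hy 1),
          mul_nonneg (sq_nonneg ((n:ℝ)-1)) (pow_nonneg hy 2),
          mul_nonneg (sq_nonneg ((n:ℝ)-1)) (pow_nonneg hy 3),
          mul_nonneg (sq_nonneg ((n:ℝ)-1)) (pow_nonneg hy 4),
          mul_nonneg (sq_nonneg ((n:ℝ)-1)) (pow_nonneg hy 5),
          mul_nonneg (sq_nonneg ((n:ℝ)-1)) (pow_nonneg hy 6),
          mul_nonneg (sq_nonneg ((n:ℝ)-1)) (pow_nonneg hy 7),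
          mul_nonneg (sq_nonneg ((n:ℝ)-1)) (pow_nonneg hy 8),
          mul_nonneg (sq_nonneg ((n:ℝ)-1)) (pow_nonneg hy 9),
          mul_nonneg (sq_nonneg ((n:ℝ)-1)) (pow_nonneg hy 10)]
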